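/- Let X ⊂ P^r (r ≥ 3) be a nondegenerate irreducible curve and x an integer with 2x < r. If the Terracini locus T(X,x) with respect to hyperplane sections is nonempty, then T(X,x+1) is also nonempty. -/
import Mathlib


lemma finrank_inf_ker_ge {K W : Type*} [Field K] [AddCommGroup W] [Module K W]
    [FiniteDimensional K W] (V : Submodule K W) (f : W →ₗ[K] (Fin 2 → K)) :
    Module.finrank K V ≤ Module.finrank K ↥(V ⊓ LinearMap.ker f) + 2 := by
  set g := f.comp V.subtype
  have h1 : Module.finrank K ↥(LinearMap.range g) + Module.finrank K ↥(LinearMap.ker g)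
      = Module.finrank K V := LinearMap.finrank_range_add_finrank_ker g
  have h2 : Module.finrank K ↥(LinearMap.range g) ≤ 2 := by
    have := Submodule.finrank_le (LinearMap.range g)
    simpa [Module.finrank_fin_fun] using this
  have h3 : Submodule.map V.subtype (LinearMap.ker g) = V ⊓ LinearMap.ker f := by
    rw [LinearMap.ker_comp, Submodule.map_comap_subtype, inf_comm]
  have h4 : Module.finrank K ↥(LinearMap.ker g) = Module.finrank K ↥(V ⊓ LinearMap.ker f) := by
    rw [← h3]
    exact (Submodule.equivMapOfInjective _ V.injective_subtype _).finrank_eq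
  omega

/-- Let `X ⊂ ℙ^r` (`r ≥ 3`) be a nondegenerate irreducible curve over an
algebraically closed field of characteristic 0 (so `X` has infinitely many points).  Here `W`
(of dimension `r + 1`) is the space of hyperplane forms and `ev p : W → K²` records the value
and derivative of a form along `X` at `p ∈ X_reg` (surjective since `X` is embedded and
smooth at `p`; nondegeneracy says no nonzero form vanishes identically on `X`).  A reduced
set `S` of `x` points belongs to the Terracini locus `T(X, x)` iff the space
`V_S = ⋂_{p ∈ S} ker (ev p)` of hyperplanes tangent to `X` along `S` is nonzero and has
projective dimension `> r - 2x`, i.e. `dim V_S > r + 1 - 2x`.  If `2x < r` and `T(X, x)` is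
nonempty, then `T(X, x + 1)` is nonempty. -/
theorem terracini_hyperplanes_step_up
    {K W X : Type*} [Field K] [IsAlgClosed K] [CharZero K]
    [AddCommGroup W] [Module K W] [FiniteDimensional K W] [Infinite X]
    (r x : ℕ) (hr : 3 ≤ r) (hW : Module.finrank K W = r + 1)
    (ev : X → (W →ₗ[K] (Fin 2 → K)))
    (hsmooth : ∀ p : X, Function.Surjective (ev p))
    (hnondeg : ∀ w : W, w ≠ 0 → ∃ p : X, ev p w 0 ≠ 0)
    (hx : 2 * x < r)
    (hne : ∃ S : Finset X, S.card = x ∧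
      (⨅ p ∈ S, LinearMap.ker (ev p)) ≠ ⊥ ∧
      r + 1 - 2 * x < Module.finrank K ↥(⨅ p ∈ S, LinearMap.ker (ev p))) :
    ∃ S : Finset X, S.card = x + 1 ∧
      (⨅ p ∈ S, LinearMap.ker (ev p)) ≠ ⊥ ∧
      r + 1 - 2 * (x + 1) < Module.finrank K ↥(⨅ p ∈ S, LinearMap.ker (ev p)) := by
  obtain ⟨S, hcard, -, hdim⟩ := hne
  classical
  obtain ⟨p, hp⟩ := S.exists_notMem
  set V := ⨅ q ∈ S, LinearMap.ker (ev q) with hV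
  have hInf : (⨅ q ∈ insert p S, LinearMap.ker (ev q)) = V ⊓ LinearMap.ker (ev p) := by
    rw [Finset.iInf_insert, inf_comm]
  have hkey := finrank_inf_ker_ge V (ev p)
  refine ⟨insert p S, by rw [Finset.card_insert_of_notMem hp, hcard], ?_, ?_⟩
  · rw [hInf]
    intro hbot
    rw [hbot] at hkey
    simp only [finrank_bot] at hkey
    omega
  · rw [hInf]; omega
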